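/- arXiv:math-ph/0309052 — 2 statements merged into one kernel-verified Lean document; each statement's English description precedes it below -/
import Mathlib

section
/- Let Y := −iH − ½∑_{j=1}^m L_j*L_j, where H := −Δ/2 + |x|²/2 − iμ[x,∇]₊ with μ ∈ ℝ and [x,∇]₊ := 2x·∇ + d, and L_j := α_j·x + β_j·∇ + γ_j with α_j, β_j ∈ ℂ^d, γ_j ∈ ℂ. Then for every f ∈ L²(ℝ^d) whose real and imaginary parts are smooth and compactly supported, Re⟨Yf, f⟩ = −½ ∑_{j=1}^m ‖L_j f‖₂² ≤ 0; in particular Y is dissipative on this domain. -/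
open MeasureTheory
open scoped ENNReal

noncomputable section

/-- `ℝ^d` with the Euclidean norm. -/
abbrev Xs (d : ℕ) := EuclideanSpace ℝ (Fin d)

/-- The partial derivative `∂ₖ` of a complex-valued function. -/
def pd {d : ℕ} (k : Fin d) (f : Xs d → ℂ) : Xs d → ℂ :=
  fun x => fderiv ℝ f x (EuclideanSpace.single k 1)

/-- A test function: its real and imaginary parts are smooth and compactly supported. -/
def IsTest {d : ℕ} (f : Xs d → ℂ) : Prop :=
  ContDiff ℝ (⊤ : ℕ∞) f ∧ HasCompactSupport f

/-- The Lindblad operator `L = α·x + β·∇ + γ`. -/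
def Lop {d : ℕ} (α β : Fin d → ℂ) (γ : ℂ) (f : Xs d → ℂ) : Xs d → ℂ := fun x =>
  (∑ k, α k * (x k * f x)) + (∑ k, β k * pd k f x) + γ * f x

/-- The formal adjoint `L* = ᾱ·x - β̄·∇ + γ̄`. -/
def LopStar {d : ℕ} (α β : Fin d → ℂ) (γ : ℂ) (f : Xs d → ℂ) : Xs d → ℂ := fun x =>
  (∑ k, star (α k) * (x k * f x)) - (∑ k, star (β k) * pd k f x) + star γ * f x

/-- The (adjusted) Hamiltonian `H = -Δ/2 + |x|²/2 - iμ[x,∇]₊` with `[x,∇]₊ = 2x·∇ + d`. -/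
def Hop {d : ℕ} (μ : ℝ) (f : Xs d → ℂ) : Xs d → ℂ := fun x =>
  -(1 / 2 : ℂ) * (∑ k, pd k (pd k f) x) + ((‖x‖ ^ 2 / 2 : ℝ) : ℂ) * f x
    - Complex.I * (μ : ℂ) * ((2 : ℂ) * (∑ k, (x k : ℂ) * pd k f x) + (d : ℂ) * f x)

/-- The operator `Y = -iH - ½ ∑ⱼ Lⱼ*Lⱼ`. -/
def Yop {d m : ℕ} (μ : ℝ) (α β : Fin m → Fin d → ℂ) (γ : Fin m → ℂ)
    (f : Xs d → ℂ) : Xs d → ℂ := fun x =>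
  -Complex.I * Hop μ f x
    - (1 / 2 : ℂ) * ∑ j, LopStar (α j) (β j) (γ j) (Lop (α j) (β j) (γ j) f) x

/-! ### Auxiliary differentiation lemmas -/

variable {d : ℕ}

lemma pd_contDiff {f : Xs d → ℂ} (hf : ContDiff ℝ (⊤:ℕ∞) f) (k : Fin d) :
    ContDiff ℝ (⊤:ℕ∞) (pd k f) :=
  (hf.fderiv_right (by exact_mod_cast le_top)).clm_apply contDiff_const

lemma pd_mul {a b : Xs d → ℂ} (ha : Differentiable ℝ a) (hb : Differentiable ℝ b)
    (k : Fin d) (x : Xs d) :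
    pd k (fun y => a y * b y) x = pd k a x * b x + a x * pd k b x := by
  unfold pd
  rw [fderiv_fun_mul (ha x) (hb x)]
  simp only [ContinuousLinearMap.add_apply, ContinuousLinearMap.coe_smul', Pi.smul_apply,
    smul_eq_mul]
  ring

lemma pd_star {a : Xs d → ℂ} (ha : Differentiable ℝ a) (k : Fin d) (x : Xs d) :
    pd k (fun y => star (a y)) x = star (pd k a x) := by
  unfold pd
  have h : HasFDerivAt (fun y => star (a y))
      (((starL' ℝ : ℂ ≃L[ℝ] ℂ) : ℂ →L[ℝ] ℂ).comp (fderiv ℝ a x)) x :=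
    ((starL' ℝ : ℂ ≃L[ℝ] ℂ).toContinuousLinearMap.hasFDerivAt).comp x (ha x).hasFDerivAt
  rw [h.fderiv]; rfl

lemma pd_coord (k : Fin d) (x : Xs d) :
    pd k (fun y : Xs d => ((y k : ℝ) : ℂ)) x = 1 := by
  unfold pd
  have h : (fun y : Xs d => ((y k : ℝ) : ℂ))
      = fun y => (Complex.ofRealCLM.comp (EuclideanSpace.proj k)) y := rfl
  rw [h, (Complex.ofRealCLM.comp (EuclideanSpace.proj k)).fderiv]
  simp [PiLp.proj_apply, EuclideanSpace.single_apply]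

lemma pd_sum {ι : Type*} (s : Finset ι) {a : ι → Xs d → ℂ}
    (ha : ∀ i, Differentiable ℝ (a i)) (k : Fin d) (x : Xs d) :
    pd k (fun y => ∑ i ∈ s, a i y) x = ∑ i ∈ s, pd k (a i) x := by
  unfold pd
  rw [fderiv_fun_sum (fun i _ => (ha i x))]
  simp

lemma pd_const_mul {a : Xs d → ℂ} (ha : Differentiable ℝ a) (c : ℂ) (k : Fin d) (x : Xs d) :
    pd k (fun y => c * a y) x = c * pd k a x := by
  unfold pd
  rw [fderiv_const_mul (ha x)]
  simp

lemma pd_add {a b : Xs d → ℂ} (ha : Differentiable ℝ a) (hb : Differentiable ℝ b)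
    (k : Fin d) (x : Xs d) :
    pd k (fun y => a y + b y) x = pd k a x + pd k b x := by
  unfold pd
  rw [fderiv_fun_add (ha x) (hb x)]; simp

lemma pd_sub {a b : Xs d → ℂ} (ha : Differentiable ℝ a) (hb : Differentiable ℝ b)
    (k : Fin d) (x : Xs d) :
    pd k (fun y => a y - b y) x = pd k a x - pd k b x := by
  unfold pd
  rw [fderiv_fun_sub (ha x) (hb x)]; simp

lemma cstar {h : Xs d → ℂ} (hh : ContDiff ℝ (⊤:ℕ∞) h) :
    ContDiff ℝ (⊤:ℕ∞) (fun y => star (h y)) :=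
  ((starL' ℝ : ℂ ≃L[ℝ] ℂ).toContinuousLinearMap.contDiff).comp hh

lemma coord_contDiff (k : Fin d) : ContDiff ℝ (⊤:ℕ∞) (fun y : Xs d => ((y k : ℝ):ℂ)) :=
  (Complex.ofRealCLM.comp (EuclideanSpace.proj k)).contDiff

lemma hcs_pd {f : Xs d → ℂ} (hc : HasCompactSupport f) (k : Fin d) :
    HasCompactSupport (pd k f) := by
  have h1 : HasCompactSupport (fderiv ℝ f) := hc.fderiv ℝ
  exact h1.comp_left (g := fun L : Xs d →L[ℝ] ℂ => L (EuclideanSpace.single k 1)) rfl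

lemma pd_zero_of_nmem {f : Xs d → ℂ} {x : Xs d} (hx : x ∉ tsupport f) (k : Fin d) :
    pd k f x = 0 := by
  unfold pd
  have h : fderiv ℝ f x = 0 := by
    by_contra h
    exact hx (support_fderiv_subset ℝ (Function.mem_support.2 h))
  simp [h]

lemma lop_contDiff (α β : Fin d → ℂ) (γ : ℂ) {f : Xs d → ℂ} (hf : ContDiff ℝ (⊤:ℕ∞) f) :
    ContDiff ℝ (⊤:ℕ∞) (Lop α β γ f) := by
  unfold Lop
  refine ContDiff.add (ContDiff.add ?_ ?_) ?_
  · exact ContDiff.sum fun k _ => contDiff_const.mul ((coord_contDiff k).mul hf)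
  · exact ContDiff.sum fun k _ => contDiff_const.mul (pd_contDiff hf k)
  · exact contDiff_const.mul hf

lemma lop_zero_of_nmem (α β : Fin d → ℂ) (γ : ℂ) {f : Xs d → ℂ} {x : Xs d}
    (hx : x ∉ tsupport f) : Lop α β γ f x = 0 := by
  have h0 : f x = 0 := image_eq_zero_of_notMem_tsupport hx
  simp [Lop, h0, pd_zero_of_nmem hx]

/-! ### Integration by parts -/

lemma ibp_real {φ : Xs d → ℝ} (hs : ContDiff ℝ (⊤:ℕ∞) φ) (hc : HasCompactSupport φ)
    (v : Xs d) : ∫ x, fderiv ℝ φ x v = 0 := by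
  obtain ⟨C, hC⟩ := ContDiff.lipschitzWith_of_hasCompactSupport hc hs (by simp)
  have H := LipschitzWith.integral_lineDeriv_mul_eq (μ := volume)
    (LipschitzWith.const (b := (1:ℝ))) hC hc (-v)
  have hlc : ∀ (x w : Xs d), lineDeriv ℝ (fun _ : Xs d => (1:ℝ)) x w = 0 := by
    intro x w; simp [lineDeriv]
  simp only [hlc, zero_mul, integral_zero, neg_neg, mul_one] at H
  have hd : ∀ x : Xs d, lineDeriv ℝ φ x v = fderiv ℝ φ x v := fun x =>
    ((hs.differentiable (by simp)) x).lineDeriv_eq_fderiv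
  simp only [hd] at H
  exact H.symm

lemma ibp_c {h : Xs d → ℂ} (hs : ContDiff ℝ (⊤:ℕ∞) h) (hc : HasCompactSupport h) (k : Fin d) :
    ∫ x, pd k h x = 0 := by
  have hdiff : Differentiable ℝ h := hs.differentiable (by simp)
  have hint : Integrable (pd k h) :=
    ((pd_contDiff hs k).continuous).integrable_of_hasCompactSupport (hcs_pd hc k)
  have hre : ∀ x, (pd k h x).re
      = fderiv ℝ (fun y => (h y).re) x (EuclideanSpace.single k 1) := by
    intro x
    have h1 : HasFDerivAt (fun y => (h y).re) (Complex.reCLM.comp (fderiv ℝ h x)) x :=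
      Complex.reCLM.hasFDerivAt.comp x (hdiff x).hasFDerivAt
    rw [h1.fderiv]; rfl
  have him : ∀ x, (pd k h x).im
      = fderiv ℝ (fun y => (h y).im) x (EuclideanSpace.single k 1) := by
    intro x
    have h1 : HasFDerivAt (fun y => (h y).im) (Complex.imCLM.comp (fderiv ℝ h x)) x :=
      Complex.imCLM.hasFDerivAt.comp x (hdiff x).hasFDerivAt
    rw [h1.fderiv]; rfl
  have hres : ContDiff ℝ (⊤:ℕ∞) (fun y => (h y).re) := Complex.reCLM.contDiff.comp hs
  have hims : ContDiff ℝ (⊤:ℕ∞) (fun y => (h y).im) := Complex.imCLM.contDiff.comp hs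
  have hcre : HasCompactSupport (fun y => (h y).re) := hc.comp_left (g := Complex.re) rfl
  have hcim : HasCompactSupport (fun y => (h y).im) := hc.comp_left (g := Complex.im) rfl
  have hre' := integral_re (𝕜 := ℂ) hint
  have him' := integral_im (𝕜 := ℂ) hint
  simp only [RCLike.re_eq_complex_re, RCLike.im_eq_complex_im] at hre' him'
  apply Complex.ext
  · rw [← hre']
    simp only [hre]
    rw [ibp_real hres hcre]
    simp
  · rw [← him']
    simp only [him]
    rw [ibp_real hims hcim]
    simp

/-! ### Pointwise algebraic identities -/

lemma L1 (α β : Fin d → ℂ) (γ : ℂ) (g f : Xs d → ℂ) (x : Xs d) :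
    star (LopStar α β γ g x) * f x
      + ∑ k, β k * (star (pd k g x) * f x + star (g x) * pd k f x)
    = star (g x) * Lop α β γ f x := by
  simp only [LopStar, Lop, star_add, star_sub, star_sum, star_mul', star_star,
    Complex.star_def, Complex.conj_ofReal, map_sum, map_mul, map_sub, map_add,
    Complex.conj_conj]
  simp only [mul_add, add_mul, sub_mul, Finset.sum_mul, Finset.mul_sum,
    Finset.sum_add_distrib, Finset.sum_sub_distrib]
  have A : ∑ i : Fin d, α i * (↑(x i) * (starRingEnd ℂ) (g x)) * f x
      = ∑ i : Fin d, (starRingEnd ℂ) (g x) * (α i * (↑(x i) * f x)) :=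
    Finset.sum_congr rfl fun i _ => by ring
  have B : ∑ i : Fin d, β i * ((starRingEnd ℂ) (pd i g x) * f x)
      = ∑ i : Fin d, β i * (starRingEnd ℂ) (pd i g x) * f x :=
    Finset.sum_congr rfl fun i _ => by ring
  have C : ∑ i : Fin d, β i * ((starRingEnd ℂ) (g x) * pd i f x)
      = ∑ i : Fin d, (starRingEnd ℂ) (g x) * (β i * pd i f x) :=
    Finset.sum_congr rfl fun i _ => by ring
  rw [A, B, C]
  ring

lemma L2 (μ : ℝ) (f : Xs d → ℂ) (x : Xs d) :
    Complex.I * star (Hop μ f x) * f x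
      - ∑ k, (-(Complex.I/2) * (star (pd k (pd k f) x) * f x + star (pd k f x) * pd k f x)
              - (μ:ℂ) * (star (f x) * f x
                  + (x k:ℂ) * (star (pd k f x) * f x + star (f x) * pd k f x)))
    = Complex.I * ((‖x‖^2/2 : ℝ):ℂ) * (star (f x) * f x)
      + (Complex.I/2) * ∑ k, star (pd k f x) * pd k f x
      - (μ:ℂ) * ∑ k, (x k : ℂ) * (star (pd k f x) * f x - star (f x) * pd k f x) := by
  simp only [Hop, Complex.star_def, map_sum, map_mul, map_sub, map_add, map_neg,
    Complex.conj_ofReal, Complex.conj_conj, Complex.conj_I, map_ofNat, map_one,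
    map_natCast, map_div₀]
  simp only [mul_add, add_mul, sub_mul, mul_sub, neg_mul, mul_neg, Finset.sum_mul,
    Finset.mul_sum, Finset.sum_add_distrib, Finset.sum_sub_distrib, Finset.sum_neg_distrib,
    Finset.sum_const, Finset.card_univ, Fintype.card_fin, nsmul_eq_mul]
  have A1 : ∑ i : Fin d, Complex.I * (1 / 2 * (starRingEnd ℂ) (pd i (pd i f) x)) * f x
      = (Complex.I/2) * ∑ i : Fin d, (starRingEnd ℂ) (pd i (pd i f) x) * f x := by
    rw [Finset.mul_sum]; exact Finset.sum_congr rfl fun i _ => by ring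
  have A2 : ∑ i : Fin d,
        Complex.I * (Complex.I * ↑μ * (2 * (↑(x i) * (starRingEnd ℂ) (pd i f x)))) * f x
      = (-2 * (μ:ℂ)) * ∑ i : Fin d, (↑(x i) * ((starRingEnd ℂ) (pd i f x) * f x)) := by
    rw [Finset.mul_sum]
    refine Finset.sum_congr rfl fun i _ => ?_
    linear_combination (2 * (μ:ℂ) * ↑(x i) * (starRingEnd ℂ) (pd i f x) * f x) * Complex.I_sq
  have A3 : ∑ i : Fin d, Complex.I / 2 * ((starRingEnd ℂ) (pd i (pd i f) x) * f x)
      = (Complex.I/2) * ∑ i : Fin d, (starRingEnd ℂ) (pd i (pd i f) x) * f x := by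
    rw [Finset.mul_sum]
  have A5 : ∑ i : Fin d, ↑μ * (↑(x i) * ((starRingEnd ℂ) (pd i f x) * f x))
      = (μ:ℂ) * ∑ i : Fin d, (↑(x i) * ((starRingEnd ℂ) (pd i f x) * f x)) := by
    rw [Finset.mul_sum]
  have A6 : ∑ i : Fin d, ↑μ * (↑(x i) * ((starRingEnd ℂ) (f x) * pd i f x))
      = (μ:ℂ) * ∑ i : Fin d, (↑(x i) * ((starRingEnd ℂ) (f x) * pd i f x)) := by
    rw [Finset.mul_sum]
  rw [A1, A2, A3, A5, A6]
  linear_combination ((d:ℂ) * ↑μ * (starRingEnd ℂ) (f x) * f x) * Complex.I_sq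

/-! ### The vector field whose divergence controls everything -/

def Gf {m : ℕ} (μ : ℝ) (α β : Fin m → Fin d → ℂ) (γ : Fin m → ℂ) (f : Xs d → ℂ)
    (k : Fin d) : Xs d → ℂ := fun y =>
  -(Complex.I/2) * (star (pd k f y) * f y)
    - (μ:ℝ) * (((y k : ℝ):ℂ) * (star (f y) * f y))
    + (1/2:ℂ) * ∑ j, β j k * (star (Lop (α j) (β j) (γ j) f y) * f y)

def Rf (μ : ℝ) (f : Xs d → ℂ) : Xs d → ℂ := fun x =>
  Complex.I * ((‖x‖^2/2 : ℝ):ℂ) * (star (f x) * f x)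
    + (Complex.I/2) * ∑ k, star (pd k f x) * pd k f x
    - (μ:ℂ) * ∑ k, (x k : ℂ) * (star (pd k f x) * f x - star (f x) * pd k f x)

lemma pdG {m : ℕ} (μ : ℝ) (α β : Fin m → Fin d → ℂ) (γ : Fin m → ℂ) {f : Xs d → ℂ}
    (hfs : ContDiff ℝ (⊤:ℕ∞) f) (k : Fin d) (x : Xs d) :
    pd k (Gf μ α β γ f k) x
      = (-(Complex.I/2) * (star (pd k (pd k f) x) * f x + star (pd k f x) * pd k f x)
          - (μ:ℂ) * (star (f x) * f x
              + (x k:ℂ) * (star (pd k f x) * f x + star (f x) * pd k f x)))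
        + (1/2:ℂ) * ∑ j, β j k * (star (pd k (Lop (α j) (β j) (γ j) f) x) * f x
            + star (Lop (α j) (β j) (γ j) f x) * pd k f x) := by
  have top : ((⊤:ℕ∞) : ℕ∞) ≤ ⊤ := le_top
  have hfd : Differentiable ℝ f := hfs.differentiable (by simp)
  have hpdf : Differentiable ℝ (pd k f) :=
    (pd_contDiff hfs k).differentiable (by simp)
  have hstarpdf : Differentiable ℝ (fun y => star (pd k f y)) :=
    (cstar (pd_contDiff hfs k)).differentiable (by simp)
  have hstarf : Differentiable ℝ (fun y => star (f y)) :=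
    (cstar hfs).differentiable (by simp)
  have hgd : ∀ j, Differentiable ℝ (Lop (α j) (β j) (γ j) f) := fun j =>
    (lop_contDiff _ _ _ hfs).differentiable (by simp)
  have hstarg : ∀ j, Differentiable ℝ (fun y => star (Lop (α j) (β j) (γ j) f y)) := fun j =>
    (cstar (lop_contDiff _ _ _ hfs)).differentiable (by simp)
  have hcoord : Differentiable ℝ (fun y : Xs d => ((y k:ℝ):ℂ)) :=
    (coord_contDiff k).differentiable (by simp)
  have hT1i : Differentiable ℝ (fun y => star (pd k f y) * f y) := hstarpdf.mul hfd
  have hT1 : Differentiable ℝ (fun y => -(Complex.I/2) * (star (pd k f y) * f y)) :=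
    hT1i.const_mul _
  have hsff : Differentiable ℝ (fun y => star (f y) * f y) := hstarf.mul hfd
  have hT2i : Differentiable ℝ (fun y => ((y k:ℝ):ℂ) * (star (f y) * f y)) :=
    hcoord.mul hsff
  have hT2 : Differentiable ℝ (fun y => ((μ:ℝ):ℂ) * (((y k:ℝ):ℂ) * (star (f y) * f y))) :=
    hT2i.const_mul _
  have hT3i : ∀ j, Differentiable ℝ
      (fun y => β j k * (star (Lop (α j) (β j) (γ j) f y) * f y)) := fun j =>
    ((hstarg j).mul hfd).const_mul _
  have hT3s : Differentiable ℝ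
      (fun y => ∑ j, β j k * (star (Lop (α j) (β j) (γ j) f y) * f y)) := by
    apply Differentiable.fun_sum
    intro j _
    exact hT3i j
  have hT3 : Differentiable ℝ
      (fun y => (1/2:ℂ) * ∑ j, β j k * (star (Lop (α j) (β j) (γ j) f y) * f y)) :=
    hT3s.const_mul _
  have hj : ∀ j : Fin m, pd k (fun y => β j k * (star (Lop (α j) (β j) (γ j) f y) * f y)) x
      = β j k * (star (pd k (Lop (α j) (β j) (γ j) f) x) * f x
          + star (Lop (α j) (β j) (γ j) f x) * pd k f x) := by
    intro j
    rw [pd_const_mul ((hstarg j).fun_mul hfd), pd_mul (hstarg j) hfd, pd_star (hgd j)]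
  show pd k (fun y =>
      (fun y => -(Complex.I/2) * (star (pd k f y) * f y)) y
        - (fun y => ((μ:ℝ):ℂ) * (((y k:ℝ):ℂ) * (star (f y) * f y))) y
      + (fun y => (1/2:ℂ) * ∑ j, β j k * (star (Lop (α j) (β j) (γ j) f y) * f y)) y) x = _
  rw [pd_add (hT1.fun_sub hT2) hT3, pd_sub hT1 hT2, pd_const_mul hT1i, pd_const_mul hT2i,
    pd_const_mul hT3s, pd_mul hstarpdf hfd, pd_mul hcoord hsff, pd_mul hstarf hfd,
    pd_coord, pd_star hpdf, pd_star hfd, pd_sum Finset.univ hT3i]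
  simp only [hj]
  ring

lemma key {m : ℕ} (μ : ℝ) (α β : Fin m → Fin d → ℂ) (γ : Fin m → ℂ) {f : Xs d → ℂ}
    (hfs : ContDiff ℝ (⊤:ℕ∞) f) (x : Xs d) :
    star (Yop μ α β γ f x) * f x
      = -(1/2:ℂ) * ∑ j, star (Lop (α j) (β j) (γ j) f x) * Lop (α j) (β j) (γ j) f x
        + ∑ k, pd k (Gf μ α β γ f k) x + Rf μ f x := by
  have e0 : star (Yop μ α β γ f x) * f x
      = Complex.I * star (Hop μ f x) * f x
        - (1/2:ℂ) * ∑ j,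
            star (LopStar (α j) (β j) (γ j) (Lop (α j) (β j) (γ j) f) x) * f x := by
    simp only [Yop, star_sub, star_mul', star_neg, Complex.star_def, Complex.conj_I, map_sum,
      map_div₀, map_one, map_ofNat]
    rw [sub_mul, mul_assoc ((1:ℂ)/2), Finset.sum_mul]
    have hc : ∀ (j : Fin m), f x
          * (starRingEnd ℂ) (LopStar (α j) (β j) (γ j) (Lop (α j) (β j) (γ j) f) x)
        = (starRingEnd ℂ) (LopStar (α j) (β j) (γ j) (Lop (α j) (β j) (γ j) f) x) * f x :=
      fun j => mul_comm _ _
    ring_nf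
  rw [e0]
  have hL1 : ∀ j, star (LopStar (α j) (β j) (γ j) (Lop (α j) (β j) (γ j) f) x) * f x
      = star (Lop (α j) (β j) (γ j) f x) * Lop (α j) (β j) (γ j) f x
        - ∑ k, β j k * (star (pd k (Lop (α j) (β j) (γ j) f) x) * f x
            + star (Lop (α j) (β j) (γ j) f x) * pd k f x) := by
    intro j
    have h := L1 (α j) (β j) (γ j) (Lop (α j) (β j) (γ j) f) f x
    linear_combination h
  simp only [hL1]
  simp only [pdG μ α β γ hfs]
  rw [Finset.sum_sub_distrib, Finset.sum_add_distrib]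
  have hswap : ∑ k : Fin d, (1/2:ℂ) * ∑ j, β j k
        * (star (pd k (Lop (α j) (β j) (γ j) f) x) * f x
            + star (Lop (α j) (β j) (γ j) f x) * pd k f x)
      = (1/2:ℂ) * ∑ j, ∑ k, β j k
        * (star (pd k (Lop (α j) (β j) (γ j) f) x) * f x
            + star (Lop (α j) (β j) (γ j) f x) * pd k f x) := by
    rw [← Finset.mul_sum, Finset.sum_comm]
  rw [hswap]
  have hL2 := L2 μ f x
  simp only [Rf]
  linear_combination hL2

/-- For every `f ∈ L²(ℝ^d)` whose real and imaginary parts are smooth and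
compactly supported, `Re⟨Yf, f⟩ = -½ ∑ⱼ ‖Lⱼ f‖₂² ≤ 0`; in particular `Y` is dissipative on
this domain. -/
theorem stmt2 {d m : ℕ} (μ : ℝ) (α β : Fin m → Fin d → ℂ) (γ : Fin m → ℂ)
    (f : Xs d → ℂ) (hf : IsTest f) :
    (∫ x, star (Yop μ α β γ f x) * f x).re
        = -(1 / 2) * ∑ j, ∫ x, ‖Lop (α j) (β j) (γ j) f x‖ ^ 2 ∧
    (∫ x, star (Yop μ α β γ f x) * f x).re ≤ 0 := by
  obtain ⟨hfs, hfc⟩ := hf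
  have hgs : ∀ j, ContDiff ℝ (⊤:ℕ∞) (Lop (α j) (β j) (γ j) f) := fun j =>
    lop_contDiff _ _ _ hfs
  have hGs : ∀ k, ContDiff ℝ (⊤:ℕ∞) (Gf μ α β γ f k) := by
    intro k
    unfold Gf
    refine ContDiff.add (ContDiff.sub ?_ ?_) ?_
    · exact contDiff_const.mul ((cstar (pd_contDiff hfs k)).mul hfs)
    · exact contDiff_const.mul ((coord_contDiff k).mul ((cstar hfs).mul hfs))
    · exact contDiff_const.mul (ContDiff.sum fun j _ =>
        contDiff_const.mul ((cstar (hgs j)).mul hfs))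
  have hGc : ∀ k, HasCompactSupport (Gf μ α β γ f k) := by
    intro k
    apply HasCompactSupport.intro hfc
    intro x hx
    have h0 : f x = 0 := image_eq_zero_of_notMem_tsupport hx
    simp [Gf, h0]
  have hIBP : ∀ k, ∫ x, pd k (Gf μ α β γ f k) x = 0 := fun k => ibp_c (hGs k) (hGc k) k
  have int_gg : ∀ j, Integrable
      (fun x => star (Lop (α j) (β j) (γ j) f x) * Lop (α j) (β j) (γ j) f x) := fun j =>
    ((cstar (hgs j)).continuous.mul (hgs j).continuous).integrable_of_hasCompactSupport
      (HasCompactSupport.intro hfc fun x hx => by simp [lop_zero_of_nmem _ _ _ hx])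
  have int_pdG : ∀ k, Integrable (fun x => pd k (Gf μ α β γ f k) x) := fun k =>
    ((pd_contDiff (hGs k) k).continuous).integrable_of_hasCompactSupport
      (hcs_pd (hGc k) k)
  have int_R : Integrable (Rf μ f) := by
    apply Continuous.integrable_of_hasCompactSupport
    · unfold Rf
      refine Continuous.sub (Continuous.add ?_ ?_) ?_
      · exact (continuous_const.mul (Complex.continuous_ofReal.comp
          ((continuous_norm.pow 2).div_const 2))).mul
          ((cstar hfs).continuous.mul hfs.continuous)
      · exact continuous_const.mul (continuous_finset_sum _ fun k _ =>
          (cstar (pd_contDiff hfs k)).continuous.mul (pd_contDiff hfs k).continuous)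
      · exact continuous_const.mul (continuous_finset_sum _ fun k _ =>
          (coord_contDiff k).continuous.mul
            (((cstar (pd_contDiff hfs k)).continuous.mul hfs.continuous).sub
              ((cstar hfs).continuous.mul (pd_contDiff hfs k).continuous)))
    · apply HasCompactSupport.intro hfc
      intro x hx
      have h0 : f x = 0 := image_eq_zero_of_notMem_tsupport hx
      simp [Rf, h0, pd_zero_of_nmem hx]
  have intA : Integrable (fun x => -(1/2:ℂ)
      * ∑ j, star (Lop (α j) (β j) (γ j) f x) * Lop (α j) (β j) (γ j) f x) :=
    (integrable_finset_sum _ fun j _ => int_gg j).const_mul _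
  have intB : Integrable (fun x => ∑ k, pd k (Gf μ α β γ f k) x) :=
    integrable_finset_sum _ fun k _ => int_pdG k
  have intAB : Integrable (fun x => -(1/2:ℂ)
      * ∑ j, star (Lop (α j) (β j) (γ j) f x) * Lop (α j) (β j) (γ j) f x
      + ∑ k, pd k (Gf μ α β γ f k) x) := intA.add intB
  have hsum : ∫ x, star (Yop μ α β γ f x) * f x
      = -(1/2:ℂ) * (∑ j, ∫ x, star (Lop (α j) (β j) (γ j) f x) * Lop (α j) (β j) (γ j) f x)
        + ∫ x, Rf μ f x := by
    have hptw : (fun x => star (Yop μ α β γ f x) * f x)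
        = fun x => (-(1/2:ℂ)
            * ∑ j, star (Lop (α j) (β j) (γ j) f x) * Lop (α j) (β j) (γ j) f x
            + ∑ k, pd k (Gf μ α β γ f k) x) + Rf μ f x :=
      funext fun x => key μ α β γ hfs x
    rw [hptw, integral_add intAB int_R, integral_add intA intB,
      integral_finset_sum _ (fun k _ => int_pdG k), integral_const_mul,
      integral_finset_sum _ (fun j _ => int_gg j)]
    simp [hIBP]
  have h2im : ∀ z : ℂ, (star z * z).im = 0 := fun z => by
    simp only [Complex.star_def, Complex.mul_im, Complex.conj_re, Complex.conj_im]
    ring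
  have hR0 : ∀ x, (Rf μ f x).re = 0 := by
    intro x
    have t1 : (Complex.I * ((‖x‖^2/2:ℝ):ℂ) * (star (f x) * f x)).re = 0 := by
      rw [Complex.mul_re, h2im, mul_zero, sub_zero, Complex.mul_re, Complex.I_re,
        Complex.I_im, Complex.ofReal_re, Complex.ofReal_im]
      ring
    have t2 : ((Complex.I/2) * ∑ k, star (pd k f x) * pd k f x).re = 0 := by
      rw [Complex.mul_re, Complex.im_sum]
      have : ∑ k : Fin d, (star (pd k f x) * pd k f x).im = 0 :=
        Finset.sum_eq_zero fun k _ => h2im _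
      rw [this, mul_zero, sub_zero, Complex.div_re]
      norm_num
    have t3 : (((μ:ℝ):ℂ) * ∑ k, (x k:ℂ)
        * (star (pd k f x) * f x - star (f x) * pd k f x)).re = 0 := by
      have hs : ∀ k : Fin d, ((x k:ℂ)
          * (star (pd k f x) * f x - star (f x) * pd k f x)).re = 0 := fun k => by
        simp only [Complex.star_def, Complex.mul_re, Complex.sub_re, Complex.sub_im,
          Complex.mul_im, Complex.conj_re, Complex.conj_im, Complex.ofReal_re,
          Complex.ofReal_im]
        ring
      rw [Complex.mul_re, Complex.re_sum]
      simp only [hs, Complex.ofReal_im, Complex.ofReal_re, Finset.sum_const_zero,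
        mul_zero, zero_mul, sub_zero]
    show (_ + _ - _ : ℂ).re = 0
    rw [Complex.sub_re, Complex.add_re, t1, t2, t3]
    norm_num
  have hRre : (∫ x, Rf μ f x).re = 0 := by
    have h1 := integral_re (𝕜 := ℂ) int_R
    simp only [RCLike.re_eq_complex_re] at h1
    rw [← h1]
    simp only [hR0]
    simp
  have hgg : ∀ j, ∫ x, star (Lop (α j) (β j) (γ j) f x) * Lop (α j) (β j) (γ j) f x
      = ((∫ x, ‖Lop (α j) (β j) (γ j) f x‖^2 : ℝ) : ℂ) := by
    intro j
    have h1 := integral_re (𝕜 := ℂ) (int_gg j)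
    have h2 := integral_im (𝕜 := ℂ) (int_gg j)
    simp only [RCLike.re_eq_complex_re, RCLike.im_eq_complex_im] at h1 h2
    apply Complex.ext
    · rw [← h1, Complex.ofReal_re]
      refine integral_congr_ae (Filter.Eventually.of_forall fun x => ?_)
      simp only [Complex.star_def, Complex.mul_re, Complex.conj_re, Complex.conj_im,
        Complex.sq_norm, Complex.normSq_apply]
      ring
    · rw [← h2, Complex.ofReal_im]
      have hz : ∀ x : Xs d, (star (Lop (α j) (β j) (γ j) f x)
          * Lop (α j) (β j) (γ j) f x).im = 0 := fun x => by
        simp only [Complex.star_def, Complex.mul_im, Complex.conj_re, Complex.conj_im]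
        ring
      simp only [hz]
      simp
  have main : (∫ x, star (Yop μ α β γ f x) * f x).re
      = -(1 / 2) * ∑ j, ∫ x, ‖Lop (α j) (β j) (γ j) f x‖ ^ 2 := by
    rw [hsum]
    simp only [hgg]
    rw [Complex.add_re, hRre, add_zero, ← Complex.ofReal_sum]
    simp [Complex.mul_re]
  refine ⟨main, ?_⟩
  rw [main]
  have hnn : (0:ℝ) ≤ ∑ j, ∫ x, ‖Lop (α j) (β j) (γ j) f x‖ ^ 2 :=
    Finset.sum_nonneg fun j _ => integral_nonneg fun x => by positivity
  linarith
end
end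

section
/- Let φ : ℝ³ → ℝ be a Schwartz function. Then for all indices k, l ∈ {1,2,3} the identity 2 ∫_{ℝ³} x_k (∂_l φ)(x) (−Δφ)(x) dx = 2 ∫_{ℝ³} (∂_k φ)(x)(∂_l φ)(x) dx − δ_{kl} ∫_{ℝ³} |∇φ(x)|² dx holds, where δ_{kl} is the Kronecker delta. In particular, if −Δφ = n, then 2∫ x_k ∂_lφ · n dx = 2∫ ∂_kφ ∂_lφ dx − δ_{kl}∫|∇φ|² dx. -/
open MeasureTheory
open scoped ENNReal NNReal

noncomputable section

/-- `ℝ³` with the Euclidean norm. -/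
abbrev X3 := EuclideanSpace ℝ (Fin 3)

/-- The Hartree (Newtonian) potential `φ[n](x) = (1/4π) ∫ n(y)/|x-y| dy`. -/
def hartree (n : X3 → ℝ) : X3 → ℝ :=
  fun x => (1 / (4 * Real.pi)) * ∫ y, n y / ‖x - y‖

/-- The (formula for the) gradient of the Hartree potential,
`∇φ[n](x) = (1/4π) ∫ (x-y)/|x-y|³ · n(y) dy`. -/
def hartreeGrad (n : X3 → ℝ) : X3 → X3 :=
  fun x => (1 / (4 * Real.pi)) • ∫ y, (n y / ‖x - y‖ ^ 3) • (x - y)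

/-- The partial derivative `∂ₖ` of a real-valued function on `ℝ³`. -/
def pdR (k : Fin 3) (g : X3 → ℝ) : X3 → ℝ :=
  fun x => fderiv ℝ g x (EuclideanSpace.single k 1)

/-- A real-valued test function: smooth with compact support. -/
def IsTestR (g : X3 → ℝ) : Prop :=
  ContDiff ℝ (⊤ : ℕ∞) g ∧ HasCompactSupport g

/-- The Laplacian of a real-valued function on `ℝ³`. -/
def lapR (g : X3 → ℝ) : X3 → ℝ := fun x => ∑ k, pdR k (pdR k g) x

open SchwartzMap

namespace S18
def e3 (m : Fin 3) : X3 := EuclideanSpace.single m (1:ℝ)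

lemma abs_coord_le (x : X3) (k : Fin 3) : |x k| ≤ ‖x‖ := by
  have h : x k = inner (𝕜 := ℝ) (EuclideanSpace.single k (1:ℝ)) x := by
    rw [EuclideanSpace.inner_single_left]; simp
  rw [h]
  calc |inner (𝕜 := ℝ) (EuclideanSpace.single k (1:ℝ)) x|
      ≤ ‖EuclideanSpace.single k (1:ℝ)‖ * ‖x‖ := abs_real_inner_le_norm _ _
    _ = ‖x‖ := by rw [EuclideanSpace.norm_single]; simp

lemma schwartz_bound (g : SchwartzMap X3 ℝ) : ∃ C, 0 ≤ C ∧ ∀ x, |g x| ≤ C := by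
  obtain ⟨C, hC0, hC⟩ := g.decay 0 0
  refine ⟨C, hC0.le, fun x => ?_⟩
  have := hC x
  simpa [norm_iteratedFDeriv_zero] using this

lemma cont_coord (k : Fin 3) : Continuous fun x : X3 => x k :=
  (EuclideanSpace.proj (𝕜 := ℝ) k).continuous

lemma int_mul (f g : SchwartzMap X3 ℝ) : Integrable (fun x : X3 => f x * g x) := by
  obtain ⟨C, hC0, hC⟩ := schwartz_bound g
  refine (((f.integrable (μ := volume)).norm).const_mul C).mono'
    ((f.continuous.mul g.continuous).aestronglyMeasurable) ?_
  filter_upwards with x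
  rw [Real.norm_eq_abs, abs_mul]
  calc |f x| * |g x| ≤ |f x| * C := mul_le_mul_of_nonneg_left (hC x) (abs_nonneg _)
    _ = C * ‖f x‖ := by rw [Real.norm_eq_abs]; ring

lemma int_coord_mul (f g : SchwartzMap X3 ℝ) (k : Fin 3) :
    Integrable (fun x : X3 => x k * (f x * g x)) := by
  obtain ⟨C, hC0, hC⟩ := schwartz_bound g
  refine ((f.integrable_pow_mul volume 1).const_mul C).mono'
    (((cont_coord k).mul (f.continuous.mul g.continuous)).aestronglyMeasurable) ?_
  filter_upwards with x
  rw [Real.norm_eq_abs, abs_mul, abs_mul]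
  calc |x k| * (|f x| * |g x|) ≤ ‖x‖ * (|f x| * C) := by
        apply mul_le_mul (abs_coord_le x k) (mul_le_mul_of_nonneg_left (hC x) (abs_nonneg _))
          (by positivity) (norm_nonneg _)
    _ = C * (‖x‖ ^ 1 * ‖f x‖) := by rw [Real.norm_eq_abs]; ring

lemma fderiv_coord (k : Fin 3) (x : X3) :
    fderiv ℝ (fun y : X3 => y k) x = EuclideanSpace.proj (𝕜 := ℝ) k :=
  (EuclideanSpace.proj (𝕜 := ℝ) k).fderiv

lemma diff_coord (k : Fin 3) : Differentiable ℝ (fun y : X3 => y k) :=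
  (EuclideanSpace.proj (𝕜 := ℝ) k).differentiable

lemma e3_apply (m k : Fin 3) : (e3 m) k = if k = m then (1:ℝ) else 0 := by
  simp [e3, EuclideanSpace.single_apply]

lemma snd_symm (φ : SchwartzMap X3 ℝ) (x v w : X3) :
    fderiv ℝ (fun y => fderiv ℝ (⇑φ) y w) x v = fderiv ℝ (fun y => fderiv ℝ (⇑φ) y v) x w := by
  have hc : DifferentiableAt ℝ (fderiv ℝ (⇑φ)) x := by
    have : ContDiff ℝ 1 (fderiv ℝ (⇑φ)) := (φ.smooth 2).fderiv_right (by norm_num)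
    exact (this.differentiable one_ne_zero).differentiableAt
  have hd : ∀ u t : X3, fderiv ℝ (fun y => fderiv ℝ (⇑φ) y u) x t
      = fderiv ℝ (fderiv ℝ (⇑φ)) x t u := by
    intro u t
    rw [fderiv_clm_apply hc (differentiableAt_const u)]
    simp
  rw [hd w v, hd v w]
  have hsym : IsSymmSndFDerivAt ℝ (⇑φ) x :=
    (φ.smooth 2).contDiffAt.isSymmSndFDerivAt (by norm_num)
  exact hsym v w

def pderivCLM (_𝕜 : Type) (m : X3) : SchwartzMap X3 ℝ →L[ℝ] SchwartzMap X3 ℝ :=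
  LineDeriv.lineDerivOpCLM ℝ (SchwartzMap X3 ℝ) m

lemma pderivCLM_apply (𝕜 : Type) (m : X3) (f : SchwartzMap X3 ℝ) (x : X3) :
    pderivCLM 𝕜 m f x = fderiv ℝ f x m := rfl

lemma pd_eq (φ : SchwartzMap X3 ℝ) (m : Fin 3) :
    pdR m (⇑φ) = ⇑(pderivCLM ℝ (e3 m) φ) := by
  funext x
  simp [pdR, pderivCLM_apply, e3]

lemma pd2_eq (φ : SchwartzMap X3 ℝ) (m l : Fin 3) :
    pdR m (pdR l (⇑φ)) = ⇑(pderivCLM ℝ (e3 m) (pderivCLM ℝ (e3 l) φ)) := by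
  rw [pd_eq φ l, pd_eq]

/-- IBP: `∫ (xₖ f) ∂ₘg = -∫ (δₖₘ f + xₖ ∂ₘf) g`. -/
lemma ibp_coord_mul (f g : SchwartzMap X3 ℝ) (k m : Fin 3) :
    ∫ x : X3, (x k * f x) * (pderivCLM ℝ (e3 m) g) x
    = -∫ x : X3, ((if k = m then (1:ℝ) else 0) * f x
        + x k * (pderivCLM ℝ (e3 m) f) x) * g x := by
  have hdf : ∀ x : X3, fderiv ℝ (fun y : X3 => y k * f y) x (e3 m)
      = (if k = m then (1:ℝ) else 0) * f x + x k * (pderivCLM ℝ (e3 m) f) x := by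
    intro x
    rw [fderiv_fun_mul ((diff_coord k).differentiableAt) f.differentiableAt]
    simp only [ContinuousLinearMap.add_apply, ContinuousLinearMap.smul_apply, fderiv_coord,
      pderivCLM_apply, smul_eq_mul]
    have : (EuclideanSpace.proj (𝕜 := ℝ) k) (e3 m) = if k = m then (1:ℝ) else 0 := by
      simpa using e3_apply m k
    rw [this]
    ring
  have key := integral_mul_fderiv_eq_neg_fderiv_mul_of_integrable (μ := volume)
    (f := fun x : X3 => x k * f x) (g := ⇑g) (v := e3 m)
    (by -- hf'g
      have : (fun x : X3 => fderiv ℝ (fun y : X3 => y k * f y) x (e3 m) * g x)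
          = fun x : X3 => (if k = m then (1:ℝ) else 0) * (f x * g x)
            + x k * ((pderivCLM ℝ (e3 m) f) x * g x) := by
        funext x; rw [hdf x]; ring
      rw [this]
      exact ((int_mul f g).const_mul _).add (int_coord_mul (pderivCLM ℝ (e3 m) f) g k))
    (by -- hfg'
      have : (fun x : X3 => (x k * f x) * fderiv ℝ (⇑g) x (e3 m))
          = fun x : X3 => x k * (f x * (pderivCLM ℝ (e3 m) g) x) := by
        funext x; rw [pderivCLM_apply]; ring
      rw [this]
      exact int_coord_mul f (pderivCLM ℝ (e3 m) g) k)
    (by -- hfg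
      have : (fun x : X3 => (x k * f x) * g x)
          = fun x : X3 => x k * (f x * g x) := by funext x; ring
      rw [this]; exact int_coord_mul f g k)
    (fun x _ => ((diff_coord k).mul f.differentiable) x) (fun x _ => g.differentiable x)
  calc ∫ x : X3, (x k * f x) * (pderivCLM ℝ (e3 m) g) x
      = ∫ x : X3, (x k * f x) * fderiv ℝ (⇑g) x (e3 m) := by
        apply integral_congr_ae; filter_upwards with x; rw [pderivCLM_apply]
    _ = -∫ x : X3, fderiv ℝ (fun y : X3 => y k * f y) x (e3 m) * g x := key
    _ = -∫ x : X3, ((if k = m then (1:ℝ) else 0) * f x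
        + x k * (pderivCLM ℝ (e3 m) f) x) * g x := by
        congr 1; apply integral_congr_ae; filter_upwards with x; rw [hdf x]

/-- IBP: `∫ xₖ (h ∂ₗh) = -(δₖₗ/2) ∫ h²`. -/
lemma ibp_coord_sq (h : SchwartzMap X3 ℝ) (k l : Fin 3) :
    ∫ x : X3, x k * (h x * (pderivCLM ℝ (e3 l) h) x)
    = -((if k = l then (1:ℝ) else 0) * (1/2) * ∫ x : X3, h x * h x) := by
  have hdg : ∀ x : X3, fderiv ℝ (fun y : X3 => h y * h y) x (e3 l)
      = 2 * (h x * (pderivCLM ℝ (e3 l) h) x) := by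
    intro x
    rw [fderiv_fun_mul h.differentiableAt h.differentiableAt]
    simp only [ContinuousLinearMap.add_apply, ContinuousLinearMap.smul_apply,
      pderivCLM_apply, smul_eq_mul]
    ring
  have key := integral_mul_fderiv_eq_neg_fderiv_mul_of_integrable (μ := volume)
    (f := fun x : X3 => x k) (g := fun x : X3 => h x * h x) (v := e3 l)
    (by
      have : (fun x : X3 => fderiv ℝ (fun y : X3 => y k) x (e3 l) * (h x * h x))
          = fun x : X3 => (if k = l then (1:ℝ) else 0) * (h x * h x) := by
        funext x
        rw [fderiv_coord]
        have : (EuclideanSpace.proj (𝕜 := ℝ) k) (e3 l) = if k = l then (1:ℝ) else 0 := by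
          simpa using e3_apply l k
        rw [this]
      rw [this]
      exact (int_mul h h).const_mul _)
    (by
      have : (fun x : X3 => x k * fderiv ℝ (fun y : X3 => h y * h y) x (e3 l))
          = fun x : X3 => x k * (h x * (pderivCLM ℝ (e3 l) h) x)
            + x k * (h x * (pderivCLM ℝ (e3 l) h) x) := by
        funext x; rw [hdg x]; ring
      rw [this]
      exact (int_coord_mul h (pderivCLM ℝ (e3 l) h) k).add
        (int_coord_mul h (pderivCLM ℝ (e3 l) h) k))
    (int_coord_mul h h k)
    (fun x _ => diff_coord k x) (fun x _ => (h.differentiable.mul h.differentiable) x)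
  have lhs : ∫ x : X3, x k * fderiv ℝ (fun y : X3 => h y * h y) x (e3 l)
      = 2 * ∫ x : X3, x k * (h x * (pderivCLM ℝ (e3 l) h) x) := by
    rw [← integral_const_mul]
    congr 1; funext x; rw [hdg x]; ring
  have rhs : ∫ x : X3, fderiv ℝ (fun y : X3 => y k) x (e3 l) * (h x * h x)
      = (if k = l then (1:ℝ) else 0) * ∫ x : X3, h x * h x := by
    rw [← integral_const_mul]
    congr 1; funext x
    rw [fderiv_coord]
    have : (EuclideanSpace.proj (𝕜 := ℝ) k) (e3 l) = if k = l then (1:ℝ) else 0 := by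
      simpa using e3_apply l k
    rw [this]
  rw [lhs, rhs] at key
  linarith [key]


lemma step (φ : SchwartzMap X3 ℝ) (k l m : Fin 3) :
    ∫ x : X3, x k * pdR l (⇑φ) x * pdR m (pdR m (⇑φ)) x
    = -((if k = m then (1:ℝ) else 0) * ∫ x : X3, pdR l (⇑φ) x * pdR m (⇑φ) x)
      + (if k = l then (1:ℝ) else 0) * (1/2) * ∫ x : X3, pdR m (⇑φ) x * pdR m (⇑φ) x := by
  set Pl := pderivCLM ℝ (e3 l) φ with hPl
  set Pm := pderivCLM ℝ (e3 m) φ with hPm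
  rw [pd2_eq φ m m, pd_eq φ l, pd_eq φ m, ← hPl, ← hPm]
  have h1 := ibp_coord_mul Pl Pm k m
  have hsplit : ∫ x : X3, ((if k = m then (1:ℝ) else 0) * Pl x
        + x k * (pderivCLM ℝ (e3 m) Pl) x) * Pm x
      = (if k = m then (1:ℝ) else 0) * (∫ x : X3, Pl x * Pm x)
        + ∫ x : X3, x k * ((pderivCLM ℝ (e3 m) Pl) x * Pm x) := by
    have heq : (fun x : X3 => ((if k = m then (1:ℝ) else 0) * Pl x
          + x k * (pderivCLM ℝ (e3 m) Pl) x) * Pm x)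
        = fun x : X3 => (if k = m then (1:ℝ) else 0) * (Pl x * Pm x)
          + x k * ((pderivCLM ℝ (e3 m) Pl) x * Pm x) := by
      funext x; ring
    rw [heq, integral_add ((int_mul Pl Pm).const_mul _) (int_coord_mul _ Pm k),
      integral_const_mul]
  have hswap : ∀ x : X3, (pderivCLM ℝ (e3 m) Pl) x = (pderivCLM ℝ (e3 l) Pm) x := by
    intro x
    rw [pderivCLM_apply, pderivCLM_apply]
    have hl : ⇑Pl = fun y => fderiv ℝ (⇑φ) y (e3 l) := funext fun y => pderivCLM_apply _ _ _ _
    have hm : ⇑Pm = fun y => fderiv ℝ (⇑φ) y (e3 m) := funext fun y => pderivCLM_apply _ _ _ _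
    rw [hl, hm]
    exact snd_symm φ x (e3 m) (e3 l)
  have hcross : ∫ x : X3, x k * ((pderivCLM ℝ (e3 m) Pl) x * Pm x)
      = -((if k = l then (1:ℝ) else 0) * (1/2) * ∫ x : X3, Pm x * Pm x) := by
    have heq : (fun x : X3 => x k * ((pderivCLM ℝ (e3 m) Pl) x * Pm x))
        = fun x : X3 => x k * (Pm x * (pderivCLM ℝ (e3 l) Pm) x) := by
      funext x; rw [hswap x]; ring
    rw [heq]
    exact ibp_coord_sq Pm k l
  have hLHS : ∫ x : X3, x k * Pl x * (pderivCLM ℝ (e3 m) Pm) x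
      = ∫ x : X3, (x k * Pl x) * (pderivCLM ℝ (e3 m) Pm) x := by
    apply integral_congr_ae; filter_upwards with x; ring
  rw [hLHS, h1, hsplit, hcross]
  ring

lemma main_identity (φ : SchwartzMap X3 ℝ) (k l : Fin 3) :
    ∫ x : X3, x k * pdR l (⇑φ) x * lapR (⇑φ) x
      = -(∫ x : X3, pdR k (⇑φ) x * pdR l (⇑φ) x)
        + (if k = l then (1:ℝ) else 0) * (1/2) * ∫ x : X3, ∑ m, pdR m (⇑φ) x ^ 2 := by
  have h1 : ∫ x : X3, x k * pdR l (⇑φ) x * lapR (⇑φ) x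
      = ∑ m : Fin 3, ∫ x : X3, x k * pdR l (⇑φ) x * pdR m (pdR m (⇑φ)) x := by
    rw [← integral_finset_sum]
    · apply integral_congr_ae; filter_upwards with x
      simp only [lapR, Finset.mul_sum]
    · intro m _
      have heq : (fun x : X3 => x k * pdR l (⇑φ) x * pdR m (pdR m (⇑φ)) x)
          = fun x : X3 => x k * ((pderivCLM ℝ (e3 l) φ) x
            * (pderivCLM ℝ (e3 m) (pderivCLM ℝ (e3 m) φ)) x) := by
        funext x; rw [pd_eq φ l, pd2_eq φ m m]; ring
      rw [heq]; exact int_coord_mul _ _ k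
  rw [h1, Finset.sum_congr rfl (fun m _ => step φ k l m), Finset.sum_add_distrib]
  have hsum1 : ∑ m : Fin 3, -((if k = m then (1:ℝ) else 0)
        * ∫ x : X3, pdR l (⇑φ) x * pdR m (⇑φ) x)
      = -(∫ x : X3, pdR k (⇑φ) x * pdR l (⇑φ) x) := by
    rw [Finset.sum_neg_distrib]
    congr 1
    simp only [ite_mul, one_mul, zero_mul]
    rw [Finset.sum_ite_eq]
    simp only [Finset.mem_univ, if_true]
    apply integral_congr_ae; filter_upwards with x; ring
  have hsum2 : ∑ m : Fin 3, (if k = l then (1:ℝ) else 0) * (1/2)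
        * ∫ x : X3, pdR m (⇑φ) x * pdR m (⇑φ) x
      = (if k = l then (1:ℝ) else 0) * (1/2) * ∫ x : X3, ∑ m, pdR m (⇑φ) x ^ 2 := by
    rw [← Finset.mul_sum]
    congr 1
    rw [integral_finset_sum]
    · apply Finset.sum_congr rfl
      intro m _
      apply integral_congr_ae; filter_upwards with x; ring
    · intro m _
      have heq : (fun x : X3 => pdR m (⇑φ) x ^ 2)
          = fun x : X3 => (pderivCLM ℝ (e3 m) φ) x * (pderivCLM ℝ (e3 m) φ) x := by
        funext x; rw [pd_eq φ m]; ring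
      rw [heq]; exact int_mul _ _
  rw [hsum1, hsum2]

end S18

/-- For every Schwartz function `φ : ℝ³ → ℝ` and all `k, l`,
`2∫ xₖ (∂ₗφ)(-Δφ) = 2∫ (∂ₖφ)(∂ₗφ) - δₖₗ ∫ |∇φ|²`; in particular, if `-Δφ = n` then
`2∫ xₖ (∂ₗφ) n = 2∫ (∂ₖφ)(∂ₗφ) - δₖₗ ∫ |∇φ|²`. -/
theorem stmt18 (φ : SchwartzMap X3 ℝ) (k l : Fin 3) :
    (2 * (∫ x : X3, x k * pdR l (⇑φ) x * -lapR (⇑φ) x) =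
      2 * (∫ x : X3, pdR k (⇑φ) x * pdR l (⇑φ) x) -
        (if k = l then (1 : ℝ) else 0) * ∫ x : X3, ∑ m, pdR m (⇑φ) x ^ 2) ∧
    ∀ n : X3 → ℝ, (∀ x, n x = -lapR (⇑φ) x) →
      2 * (∫ x : X3, x k * pdR l (⇑φ) x * n x) =
        2 * (∫ x : X3, pdR k (⇑φ) x * pdR l (⇑φ) x) -
          (if k = l then (1 : ℝ) else 0) * ∫ x : X3, ∑ m, pdR m (⇑φ) x ^ 2 := by
  have key : 2 * (∫ x : X3, x k * pdR l (⇑φ) x * -lapR (⇑φ) x) =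
      2 * (∫ x : X3, pdR k (⇑φ) x * pdR l (⇑φ) x) -
        (if k = l then (1 : ℝ) else 0) * ∫ x : X3, ∑ m, pdR m (⇑φ) x ^ 2 := by
    have hneg : ∫ x : X3, x k * pdR l (⇑φ) x * -lapR (⇑φ) x
        = -∫ x : X3, x k * pdR l (⇑φ) x * lapR (⇑φ) x := by
      rw [← integral_neg]
      apply integral_congr_ae; filter_upwards with x; ring
    rw [hneg, S18.main_identity φ k l]
    ring
  refine ⟨key, fun n hn => ?_⟩
  have heq : (fun x : X3 => x k * pdR l (⇑φ) x * n x)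
      = fun x : X3 => x k * pdR l (⇑φ) x * -lapR (⇑φ) x := by
    funext x; rw [hn x]
  rw [heq]; exact key
end
end
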